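/- If a flow is LRQ-regulated with rate r (i.e., for consecutive packets n and n+1 with arrival times A_n ≤ A_{n+1} and packet lengths l_n, the separation satisfies A_{n+1} - A_n ≥ l_n / r), and every packet has length at most L, then the flow satisfies the leaky-bucket arrival curve constraint r·t + L; that is, for all m ≤ n, the total length of packets m through n is at most r·(A_n - A_m) + L. -/

import Mathlib

/-- An LRQ-regulated flow with rate `r` and maximum packet size `L`
satisfies the leaky-bucket arrival curve `r·t + L`. -/
theorem lrq_implies_leaky_bucket
    (A l : ℕ → ℝ) (r L : ℝ)
    (hr : 0 < r)
    (hA : Monotone A)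
    (hl_pos : ∀ n, 0 < l n)
    (hl_max : ∀ n, l n ≤ L)
    (hLRQ : ∀ n, A (n + 1) - A n ≥ l n / r) :
    ∀ m n, m ≤ n →
      (∑ k ∈ Finset.Icc m n, l k) ≤ r * (A n - A m) + L := by
  have key : ∀ m n, m ≤ n →
      (∑ k ∈ Finset.Icc m n, l k) ≤ r * (A n - A m) + l n := by
    intro m n hmn
    induction n with
    | zero =>
      interval_cases m
      simp
    | succ n ih =>
      rcases Nat.lt_or_ge m (n + 1) with h | h
      · have hmn' : m ≤ n := Nat.lt_succ_iff.mp h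
        have hsum : ∑ k ∈ Finset.Icc m (n + 1), l k
            = (∑ k ∈ Finset.Icc m n, l k) + l (n + 1) := by
          rw [← Finset.sum_Icc_succ_top (Nat.le_succ_of_le hmn')]
        rw [hsum]
        have hgap : l n ≤ r * (A (n + 1) - A n) := by
          have := hLRQ n
          rw [ge_iff_le, div_le_iff₀ hr] at this
          linarith [mul_comm (A (n+1) - A n) r]
        have := ih hmn'
        nlinarith
      · have : m = n + 1 := le_antisymm hmn h
        subst this
        simp
  intro m n hmn
  calc (∑ k ∈ Finset.Icc m n, l k) ≤ r * (A n - A m) + l n := key m n hmn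
    _ ≤ r * (A n - A m) + L := by linarith [hl_max n]
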